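/- Let n ≥ 1 and let a = (a_1,…,a_n) be a tuple of integers with each a_i ≥ 2. There exists a real number r > 0, depending only on a, such that for every point z = (z_1,…,z_n) ∈ ℂ^n satisfying ∂p_a/∂z_i(z) = 0 for all i with 2 ≤ i ≤ n, the determinant of the Hessian matrix satisfies det( ∂²p_a/∂z_i∂z_j (z) )_{1≤i,j≤n} = (−1)^{n(n+1)/2} · r · z_1^{a_1−2} z_2^{a_2−1} ⋯ z_n^{a_n−1}. -/

import Mathlib

open scoped BigOperators

/-- The signed chain polynomial (0-based indices). -/
noncomputable def chainP (n : ℕ) (a : ℕ → ℕ) (z : ℕ → ℂ) : ℂ :=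
  (∑ k ∈ Finset.range (n - 1), (-1 : ℂ) ^ (k + 1) * z k ^ a k * z (k + 1))
    + (-1 : ℂ) ^ n * z (n - 1) ^ a (n - 1)

/-- The complex partial derivative of `f` with respect to the `i`-th coordinate at `z`. -/
noncomputable def pd (f : (ℕ → ℂ) → ℂ) (i : ℕ) (z : ℕ → ℂ) : ℂ :=
  deriv (fun w => f (Function.update z i w)) (z i)


noncomputable def tri (d e : ℕ → ℂ) : ℕ → ℕ → ℂ
  | _, 0 => 1
  | j, 1 => d j
  | j, (m+2) => d j * tri d e (j+1) (m+1) - e j ^ 2 * tri d e (j+2) m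
  termination_by _ m => m

noncomputable def triMat (d e : ℕ → ℂ) (j n : ℕ) : Matrix (Fin n) (Fin n) ℂ :=
  Matrix.of fun i k =>
    if (i : ℕ) = k then d (j + i)
    else if (i : ℕ) = (k : ℕ) + 1 then e (j + k)
    else if (k : ℕ) = (i : ℕ) + 1 then e (j + i) else 0

theorem det_triMat (d e : ℕ → ℂ) : ∀ n j, (triMat d e j n).det = tri d e j n
  | 0, j => by simp [triMat, tri, Matrix.det_fin_zero]
  | 1, j => by simp [triMat, tri, Matrix.det_fin_one, Matrix.of_apply]
  | (m+2), j => by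
    have hv : ∀ y : Fin (m+1), (((1 : Fin (m+2)).succAbove y) : ℕ)
        = if (y:ℕ) = 0 then 0 else (y:ℕ)+1 := by
      intro y
      rcases Nat.eq_zero_or_pos (y : ℕ) with hy | hy
      · rw [if_pos hy]
        rw [Fin.succAbove_of_castSucc_lt]
        · simp [hy]
        · simp [Fin.lt_iff_val_lt_val, hy]
      · rw [if_neg (by omega)]
        rw [Fin.succAbove_of_le_castSucc]
        · simp
        · simp [Fin.le_iff_val_le_val]; omega
    have h1 : ((triMat d e j (m+2)).submatrix Fin.succ ((0 : Fin (m+2)).succAbove))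
        = triMat d e (j+1) (m+1) := by
      ext i k
      simp only [Matrix.submatrix_apply, triMat, Matrix.of_apply, Fin.succAbove_zero,
        Fin.val_succ]
      split_ifs <;> first | rfl | (congr 1; omega) | omega | exact (‹False›).elim
    have h2 : (((triMat d e j (m+2)).submatrix Fin.succ
          ((1 : Fin (m+2)).succAbove)).submatrix ((0 : Fin (m+1)).succAbove) Fin.succ)
        = triMat d e (j+2) m := by
      ext i k
      simp only [Matrix.submatrix_apply, Fin.succAbove_zero, triMat, Matrix.of_apply,
        Fin.val_succ, hv]
      split_ifs <;> first | rfl | (congr 1; omega) | omega | exact (‹False›).elim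
    have hBcol : ∀ i : Fin m,
        ((triMat d e j (m+2)).submatrix Fin.succ ((1 : Fin (m+2)).succAbove)) i.succ 0 = 0 := by
      intro i
      simp only [Matrix.submatrix_apply, triMat, Matrix.of_apply, Fin.val_succ, hv,
        Fin.val_zero]
      split_ifs <;> first | rfl | omega | exact (‹False›).elim
    have hB00 : ((triMat d e j (m+2)).submatrix Fin.succ ((1 : Fin (m+2)).succAbove))
        ((0 : Fin (m+1))) 0 = e j := by
      simp only [Matrix.submatrix_apply, triMat, Matrix.of_apply, Fin.val_succ, hv,
        Fin.val_zero]
      norm_num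
    have hdetB : ((triMat d e j (m+2)).submatrix Fin.succ ((1 : Fin (m+2)).succAbove)).det
        = e j * tri d e (j+2) m := by
      rw [Matrix.det_succ_column_zero, Fin.sum_univ_succ]
      rw [hB00]
      simp only [hBcol, mul_zero, zero_mul, Finset.sum_const_zero, add_zero]
      rw [h2, det_triMat d e m (j+2)]
      simp
    have hrow : ∀ k : Fin m, (triMat d e j (m+2)) 0 k.succ.succ = 0 := by
      intro k
      simp only [triMat, Matrix.of_apply, Fin.val_succ, Fin.val_zero]
      split_ifs <;> first | rfl | omega | exact (‹False›).elim
    rw [Matrix.det_succ_row_zero, Fin.sum_univ_succ, Fin.sum_univ_succ]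
    simp only [hrow, mul_zero, zero_mul, Finset.sum_const_zero, add_zero]
    rw [h1, det_triMat d e (m+1) (j+1), Fin.succ_zero_eq_one, hdetB]
    have hA00 : (triMat d e j (m+2)) 0 0 = d j := by
      simp [triMat]
    have hA01 : (triMat d e j (m+2)) 0 (1 : Fin (m+2)) = e j := by
      simp only [triMat, Matrix.of_apply, Fin.val_one, Fin.val_zero]
      norm_num
    rw [hA00, hA01]
    show _ = tri d e j (m+2)
    rw [tri]
    simp only [Fin.val_zero, Fin.val_one, pow_zero, pow_one]
    ring
  termination_by n => n

lemma diffAt_upd_pow_mul (z : ℕ → ℂ) (i k l : ℕ) (c : ℂ) (m : ℕ) :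
    DifferentiableAt ℂ
      (fun w => c * (Function.update z i w k) ^ m * (Function.update z i w l)) (z i) := by
  simp only [Function.update_apply]
  by_cases hk : k = i <;> by_cases hl : l = i <;>
    simp only [if_pos, if_neg, hk, hl, if_true, if_false] <;> fun_prop

lemma diffAt_upd_pow (z : ℕ → ℂ) (i k : ℕ) (c : ℂ) (m : ℕ) :
    DifferentiableAt ℂ (fun w => c * (Function.update z i w k) ^ m) (z i) := by
  simp only [Function.update_apply]
  by_cases hk : k = i <;> simp only [if_pos, if_neg, hk, if_true, if_false] <;> fun_prop

lemma deriv_upd_pow (z : ℕ → ℂ) (i k : ℕ) (c : ℂ) (m : ℕ) :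
    deriv (fun w => c * (Function.update z i w k) ^ m) (z i)
      = if k = i then c * m * z k ^ (m - 1) else 0 := by
  by_cases hk : k = i
  · subst hk
    simp only [Function.update_self, if_true]
    rw [deriv_const_mul_field, deriv_pow_field]
    ring
  · simp only [Function.update_of_ne hk, if_neg hk]
    exact deriv_const _ _

lemma deriv_upd_pow_mul (z : ℕ → ℂ) (i k l : ℕ) (hkl : k ≠ l) (c : ℂ) (m : ℕ) :
    deriv (fun w => c * (Function.update z i w k) ^ m * (Function.update z i w l)) (z i)
      = (if k = i then c * m * z k ^ (m - 1) * z l else 0)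
        + (if l = i then c * z k ^ m else 0) := by
  by_cases hk : k = i
  · subst hk
    have hl : l ≠ k := fun h => hkl (h ▸ rfl)
    simp only [Function.update_self, Function.update_of_ne hl, if_neg hl, if_true, add_zero]
    have : (fun w => c * w ^ m * z l) = fun w : ℂ => (c * z l) * w ^ m := by
      funext w; ring
    rw [this, deriv_const_mul_field, deriv_pow_field]
    ring
  · by_cases hl : l = i
    · subst hl
      simp only [Function.update_self, Function.update_of_ne hk, if_neg hk, if_true, zero_add]
      have : (fun w => c * z k ^ m * w) = fun w : ℂ => (c * z k ^ m) * w := rfl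
      rw [this, deriv_const_mul_field]
      simp
    · simp only [Function.update_of_ne hk, Function.update_of_ne hl, if_neg hk, if_neg hl,
        add_zero]
      exact deriv_const _ _

lemma pd_chainP (n : ℕ) (hn : 1 ≤ n) (a : ℕ → ℕ) (i : ℕ) (z : ℕ → ℂ) :
    pd (chainP n a) i z =
      (if i + 2 ≤ n then (-1 : ℂ) ^ (i + 1) * (a i) * z i ^ (a i - 1) * z (i + 1) else 0)
      + (if 1 ≤ i ∧ i + 1 ≤ n then (-1 : ℂ) ^ i * z (i - 1) ^ (a (i - 1)) else 0)
      + (if i + 1 = n then (-1 : ℂ) ^ n * (a (n - 1)) * z (n - 1) ^ (a (n - 1) - 1) else 0) := by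
  have hdS : DifferentiableAt ℂ (fun w => ∑ k ∈ Finset.range (n - 1),
      (-1 : ℂ) ^ (k + 1) * (Function.update z i w k) ^ a k * (Function.update z i w (k + 1)))
      (z i) := DifferentiableAt.fun_sum fun k _ => diffAt_upd_pow_mul z i k (k+1) _ _
  have hdL : DifferentiableAt ℂ
      (fun w => (-1 : ℂ) ^ n * (Function.update z i w (n - 1)) ^ a (n - 1)) (z i) :=
    diffAt_upd_pow z i (n - 1) _ _
  rw [pd]
  simp only [chainP]
  rw [deriv_fun_add hdS hdL,
    deriv_fun_sum fun k _ => diffAt_upd_pow_mul z i k (k+1) ((-1 : ℂ)^(k+1)) (a k)]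
  have hterm : ∀ k ∈ Finset.range (n - 1),
      deriv (fun w => (-1 : ℂ) ^ (k + 1) * (Function.update z i w k) ^ a k
          * (Function.update z i w (k + 1))) (z i)
        = (if k = i then (-1 : ℂ) ^ (k+1) * (a k) * z k ^ (a k - 1) * z (k + 1) else 0)
          + (if k + 1 = i then (-1 : ℂ) ^ (k+1) * z k ^ (a k) else 0) := by
    intro k _
    exact deriv_upd_pow_mul z i k (k+1) (by omega) _ _
  rw [Finset.sum_congr rfl hterm, Finset.sum_add_distrib]
  have hc1 : (∑ k ∈ Finset.range (n - 1),
      if k = i then (-1 : ℂ) ^ (k+1) * (a k) * z k ^ (a k - 1) * z (k + 1) else 0)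
      = if i + 2 ≤ n then (-1 : ℂ) ^ (i + 1) * (a i) * z i ^ (a i - 1) * z (i + 1) else 0 := by
    rw [Finset.sum_ite_eq' (Finset.range (n - 1)) i
      (fun k => (-1 : ℂ) ^ (k+1) * (a k) * z k ^ (a k - 1) * z (k + 1))]
    have : i ∈ Finset.range (n - 1) ↔ i + 2 ≤ n := by
      rw [Finset.mem_range]; omega
    by_cases h : i + 2 ≤ n
    · rw [if_pos (this.mpr h), if_pos h]
    · rw [if_neg (fun hh => h (this.mp hh)), if_neg h]
  have hc2 : (∑ k ∈ Finset.range (n - 1),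
      if k + 1 = i then (-1 : ℂ) ^ (k+1) * z k ^ (a k) else 0)
      = if 1 ≤ i ∧ i + 1 ≤ n then (-1 : ℂ) ^ i * z (i - 1) ^ (a (i - 1)) else 0 := by
    by_cases h : 1 ≤ i ∧ i + 1 ≤ n
    · rw [if_pos h]
      rw [Finset.sum_eq_single (i - 1)]
      · rw [if_pos (by omega)]
        have h1 : i - 1 + 1 = i := by omega
        rw [h1]
      · intro k _ hk
        rw [if_neg (by omega)]
      · intro hmem
        exfalso
        exact hmem (Finset.mem_range.mpr (by omega))
    · rw [if_neg h]
      apply Finset.sum_eq_zero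
      intro k hk
      rw [Finset.mem_range] at hk
      rw [if_neg (by omega)]
  have hc3 : deriv (fun w => (-1 : ℂ) ^ n * (Function.update z i w (n - 1)) ^ a (n - 1)) (z i)
      = if i + 1 = n then (-1 : ℂ) ^ n * (a (n - 1)) * z (n - 1) ^ (a (n - 1) - 1) else 0 := by
    rw [deriv_upd_pow]
    by_cases h : i + 1 = n
    · rw [if_pos (by omega), if_pos h]
    · rw [if_neg (by omega), if_neg h]
  rw [hc1, hc2, hc3]

lemma deriv_if (P : Prop) [Decidable P] (f : ℂ → ℂ) (x : ℂ) :
    deriv (fun w => if P then f w else 0) x = if P then deriv f x else 0 := by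
  by_cases h : P
  · simp only [if_pos h]
  · simp only [if_neg h, deriv_const]

lemma diffAt_if (P : Prop) [Decidable P] (f : ℂ → ℂ) (x : ℂ)
    (h : DifferentiableAt ℂ f x) :
    DifferentiableAt ℂ (fun w => if P then f w else 0) x := by
  by_cases hP : P
  · simp only [if_pos hP]; exact h
  · simp only [if_neg hP]; exact differentiableAt_const _

lemma pd_pd (n : ℕ) (hn : 1 ≤ n) (a : ℕ → ℕ) (i j : ℕ) (hi : i < n) (hj : j < n) (z : ℕ → ℂ) :
    pd (pd (chainP n a) j) i z =
      if i = j then (-1 : ℂ) ^ (i + 1) * (a i) * ((a i - 1 : ℕ) : ℂ) * z i ^ (a i - 2)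
          * (if i + 2 ≤ n then z (i + 1) else 1)
      else if i + 1 = j then (-1 : ℂ) ^ (i + 1) * (a i) * z i ^ (a i - 1)
      else if j + 1 = i then (-1 : ℂ) ^ (j + 1) * (a j) * z j ^ (a j - 1)
      else 0 := by
  have hG : pd (chainP n a) j = fun z' =>
      (if j + 2 ≤ n then (-1 : ℂ) ^ (j + 1) * (a j) * z' j ^ (a j - 1) * z' (j + 1) else 0)
      + (if 1 ≤ j ∧ j + 1 ≤ n then (-1 : ℂ) ^ j * z' (j - 1) ^ (a (j - 1)) else 0)
      + (if j + 1 = n then (-1 : ℂ) ^ n * (a (n - 1)) * z' (n - 1) ^ (a (n - 1) - 1) else 0) :=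
    funext fun z' => pd_chainP n hn a j z'
  rw [hG, pd]
  have d1 : DifferentiableAt ℂ (fun w => if j + 2 ≤ n then
      (-1 : ℂ) ^ (j + 1) * (a j) * (Function.update z i w j) ^ (a j - 1)
        * (Function.update z i w (j + 1)) else 0) (z i) :=
    diffAt_if _ _ _ (diffAt_upd_pow_mul z i j (j+1) _ _)
  have d2 : DifferentiableAt ℂ (fun w => if 1 ≤ j ∧ j + 1 ≤ n then
      (-1 : ℂ) ^ j * (Function.update z i w (j - 1)) ^ (a (j - 1)) else 0) (z i) :=
    diffAt_if _ _ _ (diffAt_upd_pow z i (j-1) _ _)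
  have d3 : DifferentiableAt ℂ (fun w => if j + 1 = n then
      (-1 : ℂ) ^ n * (a (n - 1)) * (Function.update z i w (n - 1)) ^ (a (n - 1) - 1) else 0)
      (z i) := diffAt_if _ _ _ (diffAt_upd_pow z i (n-1) _ _)
  rw [deriv_fun_add (d1.fun_add d2) d3, deriv_fun_add d1 d2, deriv_if, deriv_if, deriv_if,
    deriv_upd_pow_mul z i j (j+1) (by omega), deriv_upd_pow, deriv_upd_pow]
  by_cases hij : i = j
  · subst hij
    by_cases h2 : i + 2 ≤ n
    · have hT2 : (if 1 ≤ i ∧ i + 1 ≤ n then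
          (if i - 1 = i then (-1 : ℂ) ^ i * (a (i-1)) * z (i-1) ^ (a (i-1) - 1) else 0)
          else 0) = 0 := by
        by_cases h6 : 1 ≤ i ∧ i + 1 ≤ n
        · rw [if_pos h6, if_neg (by omega)]
        · rw [if_neg h6]
      simp only [hT2, eq_self_iff_true, ite_true, eq_true h2,
        eq_false (show ¬(i + 1 = n) by omega), eq_false (show ¬(i + 1 = i) by omega),
        ite_false, add_zero, zero_add]
      all_goals rw [show a i - 1 - 1 = a i - 2 by omega]
      all_goals ring
    · have hT2 : (if 1 ≤ i ∧ i + 1 ≤ n then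
          (if i - 1 = i then (-1 : ℂ) ^ i * (a (i-1)) * z (i-1) ^ (a (i-1) - 1) else 0)
          else 0) = 0 := by
        by_cases h6 : 1 ≤ i ∧ i + 1 ≤ n
        · rw [if_pos h6, if_neg (by omega)]
        · rw [if_neg h6]
      simp only [hT2, eq_self_iff_true, ite_true, eq_false h2,
        eq_true (show i + 1 = n by omega), eq_true (show n - 1 = i by omega),
        ite_false, add_zero, zero_add, mul_one]
      all_goals rw [show n - 1 = i by omega, show n = i + 1 by omega,
        show a i - 1 - 1 = a i - 2 by omega]
      all_goals ring
  · by_cases hij2 : i + 1 = j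
    · subst hij2
      simp only [eq_false hij, eq_false (show ¬(i + 1 = i) by omega),
        eq_false (show ¬(i + 1 + 1 = i) by omega),
        eq_true (show (1 ≤ i + 1 ∧ i + 1 + 1 ≤ n) by omega),
        eq_self_iff_true, ite_true, ite_false, add_zero, zero_add, ite_self,
        eq_true (show i + 1 - 1 = i by omega),
        eq_false (show ¬(n - 1 = i) by omega), Nat.add_sub_cancel]
      all_goals ring
    · by_cases hij3 : j + 1 = i
      · subst hij3
        simp only [eq_false hij, eq_false (show ¬(j + 1 + 1 = j) by omega),
          eq_false (show ¬(j = j + 1) by omega), eq_self_iff_true, ite_true, ite_false,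
          eq_true (show j + 2 ≤ n by omega), eq_false (show ¬(j + 1 = n) by omega),
          eq_false (show ¬(j - 1 = j + 1) by omega), add_zero, zero_add, ite_self]
      · have hT3 : (if j + 1 = n then
            (if n - 1 = i then (-1 : ℂ) ^ n * (a (n-1)) * ((a (n-1) - 1 : ℕ) : ℂ)
              * z (n-1) ^ (a (n-1) - 1 - 1) else 0) else 0) = 0 := by
          by_cases h6 : j + 1 = n
          · rw [if_pos h6, if_neg (by omega)]
          · rw [if_neg h6]
        simp only [hT3, eq_false hij, eq_false hij2, eq_false hij3,
          eq_false (show ¬(j = i) by omega), eq_false (show ¬(j - 1 = i) by omega),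
          ite_false, add_zero, zero_add, ite_self]

noncomputable def delr (a : ℕ → ℕ) (n : ℕ) : ℕ → ℝ
  | 0 => 1
  | 1 => (a (n-1) : ℝ) * ((a (n-1) : ℝ) - 1)
  | (m+2) => (a (n-m-2) : ℝ) * (((a (n-m-2) : ℝ) - 1) * delr a n (m+1)
      + (a (n-m-2) : ℝ) * (a (n-m-1) : ℝ) * delr a n m)
  termination_by m => m

lemma delr_pos (a : ℕ → ℕ) (n : ℕ) (hn : 1 ≤ n) (ha : ∀ i < n, 2 ≤ a i) :
    ∀ m, 0 < delr a n m := by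
  intro m
  induction m using Nat.strong_induction_on with
  | _ m ih =>
    match m with
    | 0 => norm_num [delr]
    | 1 =>
      have h := ha (n-1) (by omega)
      have h2 : (2:ℝ) ≤ (a (n-1) : ℝ) := by exact_mod_cast h
      rw [delr]
      nlinarith
    | (m+2) =>
      have h := ha (n-m-2) (by omega)
      have h2 : (2:ℝ) ≤ (a (n-m-2) : ℝ) := by exact_mod_cast h
      have h3 := ha (n-m-1) (by omega)
      have h4 : (2:ℝ) ≤ (a (n-m-1) : ℝ) := by exact_mod_cast h3
      have p1 := ih (m+1) (by omega)
      have p0 := ih m (by omega)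
      rw [delr]
      have t1 : 0 < ((a (n-m-2) : ℝ) - 1) * delr a n (m+1) := mul_pos (by linarith) p1
      have t2 : 0 < (a (n-m-2) : ℝ) * (a (n-m-1) : ℝ) * delr a n m :=
        mul_pos (mul_pos (by linarith) (by linarith)) p0
      have := mul_pos (show (0:ℝ) < (a (n-m-2) : ℝ) by linarith)
        (show (0:ℝ) < ((a (n-m-2) : ℝ) - 1) * delr a n (m+1)
          + (a (n-m-2) : ℝ) * (a (n-m-1) : ℝ) * delr a n m by linarith)
      linarith

noncomputable def dfun (n : ℕ) (a : ℕ → ℕ) (z : ℕ → ℂ) (i : ℕ) : ℂ :=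
  (-1 : ℂ) ^ (i + 1) * (a i) * ((a i - 1 : ℕ) : ℂ) * z i ^ (a i - 2)
    * (if i + 2 ≤ n then z (i + 1) else 1)

noncomputable def efun (a : ℕ → ℕ) (z : ℕ → ℂ) (i : ℕ) : ℂ :=
  (-1 : ℂ) ^ (i + 1) * (a i) * z i ^ (a i - 1)

lemma tri_eval (n : ℕ) (hn : 1 ≤ n) (a : ℕ → ℕ) (ha : ∀ i < n, 2 ≤ a i) (z : ℕ → ℂ)
    (hrel1 : ∀ i, i + 3 ≤ n → z i ^ a i = (a (i+1) : ℂ) * z (i+1) ^ (a (i+1) - 1) * z (i+2))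
    (hrel2 : ∀ i, i + 2 = n → z i ^ a i = (a (i+1) : ℂ) * z (i+1) ^ (a (i+1) - 1)) :
    ∀ m j, j + m = n → 1 ≤ m →
      tri (dfun n a z) (efun a z) j m
        = (-1 : ℂ) ^ (∑ i ∈ Finset.Ico j n, (i+1)) * ((delr a n m : ℝ) : ℂ)
          * z j ^ (a j - 2) * ∏ i ∈ Finset.Ico (j+1) n, z i ^ (a i - 1) := by
  intro m
  induction m using Nat.strong_induction_on with
  | _ m ih =>
    intro j hjm hm
    match m, hm with
    | 1, _ =>
      have e1 : tri (dfun n a z) (efun a z) j 1 = dfun n a z j := by simp [tri]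
      have e2 : delr a n 1 = (a (n-1) : ℝ) * ((a (n-1) : ℝ) - 1) := by simp [delr]
      have hIs : Finset.Ico j n = {j} := by
        ext x; simp only [Finset.mem_Ico, Finset.mem_singleton]; omega
      have hIp : Finset.Ico (j+1) n = ∅ := Finset.Ico_eq_empty (by omega)
      have h1 : 1 ≤ a j := by have := ha j (by omega); omega
      rw [e1, e2, hIs, hIp, Finset.sum_singleton, Finset.prod_empty, dfun,
        if_neg (by omega : ¬(j + 2 ≤ n)), show n - 1 = j by omega]
      push_cast [Nat.cast_sub h1]
      ring
    | 2, _ =>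
      have e1 : tri (dfun n a z) (efun a z) j 2
          = dfun n a z j * dfun n a z (j+1) - efun a z j ^ 2 * 1 := by simp [tri]
      have e2 : delr a n 2 = (a (n-0-2) : ℝ) * (((a (n-0-2) : ℝ) - 1) * delr a n 1
          + (a (n-0-2) : ℝ) * (a (n-0-1) : ℝ) * delr a n 0) := by simp [delr]
      have e3 : delr a n 1 = (a (n-1) : ℝ) * ((a (n-1) : ℝ) - 1) := by simp [delr]
      have e4 : delr a n 0 = 1 := by simp [delr]
      have hIs : Finset.Ico j n = {j, j+1} := by
        ext x; simp only [Finset.mem_Ico, Finset.mem_insert, Finset.mem_singleton]; omega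
      have hIp : Finset.Ico (j+1) n = {j+1} := by
        ext x; simp only [Finset.mem_Ico, Finset.mem_singleton]; omega
      have h1 : 1 ≤ a j := by have := ha j (by omega); omega
      have h1' : 1 ≤ a (j+1) := by have := ha (j+1) (by omega); omega
      have hsplit : z j ^ (a j - 1) * z j ^ (a j - 1) = z j ^ (a j - 2) * z j ^ (a j) := by
        rw [← pow_add, ← pow_add]; congr 1
        have := ha j (by omega); omega
      have hrel := hrel2 j (by omega)
      have hm1 : z (j+1) * z (j+1) ^ (a (j+1) - 2) = z (j+1) ^ (a (j+1) - 1) := by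
        rw [← pow_succ']; congr 1
        have := ha (j+1) (by omega); omega
      rw [e1, e2, e3, e4, hIs, hIp, Finset.sum_pair (by omega : j ≠ j + 1),
        Finset.prod_singleton, dfun, dfun,
        if_pos (by omega : j + 2 ≤ n), if_neg (by omega : ¬(j + 1 + 2 ≤ n)),
        efun, show n - 0 - 2 = j by omega, show n - 0 - 1 = j + 1 by omega,
        show n - 1 = j + 1 by omega]
      push_cast [Nat.cast_sub h1, Nat.cast_sub h1']
      linear_combination (-((-1:ℂ)^(j+1))^2 * (a j : ℂ)^2) * hsplit
        + (-((-1:ℂ)^(j+1))^2 * (a j : ℂ)^2 * z j ^ (a j - 2)) * hrel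
        + ((-1:ℂ)^(j+1) * (-1:ℂ)^(j+2) * (a j : ℂ) * ((a j : ℂ) - 1) * (a (j+1) : ℂ)
            * ((a (j+1) : ℂ) - 1) * z j ^ (a j - 2)) * hm1
    | (m+3), _ =>
      have e1 : tri (dfun n a z) (efun a z) j (m+3)
          = dfun n a z j * tri (dfun n a z) (efun a z) (j+1) (m+2)
            - efun a z j ^ 2 * tri (dfun n a z) (efun a z) (j+2) (m+1) := by simp [tri]
      have e2 : delr a n (m+3) = (a (n-(m+1)-2) : ℝ) * (((a (n-(m+1)-2) : ℝ) - 1) * delr a n (m+2)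
          + (a (n-(m+1)-2) : ℝ) * (a (n-(m+1)-1) : ℝ) * delr a n (m+1)) := by simp [delr]
      have hS0 : ∑ i ∈ Finset.Ico j n, (i+1)
          = (j+1) + ∑ i ∈ Finset.Ico (j+1) n, (i+1) :=
        Finset.sum_eq_sum_Ico_succ_bot (by omega) _
      have hS1 : ∑ i ∈ Finset.Ico (j+1) n, (i+1)
          = (j+2) + ∑ i ∈ Finset.Ico (j+2) n, (i+1) :=
        Finset.sum_eq_sum_Ico_succ_bot (by omega) _
      have hP0 : ∏ i ∈ Finset.Ico (j+1) n, z i ^ (a i - 1)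
          = z (j+1) ^ (a (j+1) - 1) * ∏ i ∈ Finset.Ico (j+2) n, z i ^ (a i - 1) :=
        Finset.prod_eq_prod_Ico_succ_bot (by omega) _
      have hP1 : ∏ i ∈ Finset.Ico (j+2) n, z i ^ (a i - 1)
          = z (j+2) ^ (a (j+2) - 1) * ∏ i ∈ Finset.Ico (j+3) n, z i ^ (a i - 1) :=
        Finset.prod_eq_prod_Ico_succ_bot (by omega) _
      have h1 : 1 ≤ a j := by have := ha j (by omega); omega
      have h1' : 1 ≤ a (j+1) := by have := ha (j+1) (by omega); omega
      have hm1 : z (j+1) * z (j+1) ^ (a (j+1) - 2) = z (j+1) ^ (a (j+1) - 1) := by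
        rw [← pow_succ']; congr 1
        have := ha (j+1) (by omega); omega
      have hm2 : z (j+2) * z (j+2) ^ (a (j+2) - 2) = z (j+2) ^ (a (j+2) - 1) := by
        rw [← pow_succ']; congr 1
        have := ha (j+2) (by omega); omega
      have hsplit : z j ^ (a j - 1) * z j ^ (a j - 1) = z j ^ (a j - 2) * z j ^ (a j) := by
        rw [← pow_add, ← pow_add]; congr 1
        have := ha j (by omega); omega
      have hrel := hrel1 j (by omega)
      rw [e1, ih (m+2) (by omega) (j+1) (by omega) (by omega),
        ih (m+1) (by omega) (j+2) (by omega) (by omega),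
        e2, hS0, hS1, hP0, hP1, dfun, efun, if_pos (by omega : j + 2 ≤ n),
        show n - (m+1) - 2 = j by omega, show n - (m+1) - 1 = j + 1 by omega,
        pow_add, pow_add]
      push_cast [Nat.cast_sub h1, Nat.cast_sub h1']
      linear_combination
        ((-1:ℂ)^(j+1) * (a j : ℂ) * ((a j : ℂ) - 1) * z j ^ (a j - 2)
            * ((-1:ℂ)^(j+2) * (-1:ℂ)^(∑ i ∈ Finset.Ico (j+2) n, (i+1)))
            * ((delr a n (m+2) : ℝ) : ℂ) * z (j+2) ^ (a (j+2) - 1)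
            * ∏ i ∈ Finset.Ico (j+3) n, z i ^ (a i - 1)) * hm1
        + (-((-1:ℂ)^(j+1))^2 * (a j : ℂ)^2 * (-1:ℂ)^(∑ i ∈ Finset.Ico (j+2) n, (i+1))
            * ((delr a n (m+1) : ℝ) : ℂ) * z (j+2) ^ (a (j+2) - 2)
            * ∏ i ∈ Finset.Ico (j+3) n, z i ^ (a i - 1)) * hsplit
        + (-((-1:ℂ)^(j+1))^2 * (a j : ℂ)^2 * (-1:ℂ)^(∑ i ∈ Finset.Ico (j+2) n, (i+1))
            * ((delr a n (m+1) : ℝ) : ℂ) * z (j+2) ^ (a (j+2) - 2) * z j ^ (a j - 2)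
            * ∏ i ∈ Finset.Ico (j+3) n, z i ^ (a i - 1)) * hrel
        + (-((-1:ℂ)^(j+1))^2 * (a j : ℂ)^2 * (-1:ℂ)^(∑ i ∈ Finset.Ico (j+2) n, (i+1))
            * ((delr a n (m+1) : ℝ) : ℂ) * (a (j+1) : ℂ) * z (j+1) ^ (a (j+1) - 1)
            * z j ^ (a j - 2)
            * ∏ i ∈ Finset.Ico (j+3) n, z i ^ (a i - 1)) * hm2

theorem stmt_9 (n : ℕ) (hn : 1 ≤ n) (a : ℕ → ℕ) (ha : ∀ i < n, 2 ≤ a i) :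
    ∃ r : ℝ, 0 < r ∧ ∀ z : ℕ → ℂ,
      (∀ i : ℕ, 1 ≤ i → i < n → pd (chainP n a) i z = 0) →
      Matrix.det (Matrix.of fun i j : Fin n => pd (pd (chainP n a) (j : ℕ)) (i : ℕ) z)
        = (-1 : ℂ) ^ (n * (n + 1) / 2) * (r : ℂ) * z 0 ^ (a 0 - 2)
            * ∏ i ∈ Finset.Ico 1 n, z i ^ (a i - 1) := by
  refine ⟨delr a n n, delr_pos a n hn ha n, ?_⟩
  intro z hz
  have hsq : ∀ i : ℕ, ((-1:ℂ)^(i+1))^2 = 1 := by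
    intro i
    rw [← pow_mul, mul_comm, pow_mul]
    norm_num
  have hrel1 : ∀ i, i + 3 ≤ n →
      z i ^ a i = (a (i+1) : ℂ) * z (i+1) ^ (a (i+1) - 1) * z (i+2) := by
    intro i hi3
    have h := hz (i+1) (by omega) (by omega)
    rw [pd_chainP n hn a (i+1) z] at h
    rw [if_pos (by omega : (i+1) + 2 ≤ n),
      if_pos (show 1 ≤ i + 1 ∧ (i+1) + 1 ≤ n by omega),
      if_neg (by omega : ¬((i+1) + 1 = n))] at h
    simp only [Nat.add_sub_cancel] at h
    linear_combination ((-1:ℂ)^(i+1)) * h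
      + ((a (i+1) : ℂ) * z (i+1) ^ (a (i+1) - 1) * z (i+2) - z i ^ a i) * hsq i
  have hrel2 : ∀ i, i + 2 = n →
      z i ^ a i = (a (i+1) : ℂ) * z (i+1) ^ (a (i+1) - 1) := by
    intro i hi2
    have h := hz (i+1) (by omega) (by omega)
    rw [pd_chainP n hn a (i+1) z] at h
    rw [if_neg (by omega : ¬((i+1) + 2 ≤ n)),
      if_pos (show 1 ≤ i + 1 ∧ (i+1) + 1 ≤ n by omega),
      if_pos (by omega : (i+1) + 1 = n)] at h
    rw [show n - 1 = i + 1 by omega, show n = i + 2 by omega] at h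
    simp only [Nat.add_sub_cancel] at h
    linear_combination ((-1:ℂ)^(i+1)) * h
      + ((a (i+1) : ℂ) * z (i+1) ^ (a (i+1) - 1) - z i ^ a i) * hsq i
  have hmat : (Matrix.of fun i j : Fin n => pd (pd (chainP n a) (j : ℕ)) (i : ℕ) z)
      = triMat (dfun n a z) (efun a z) 0 n := by
    ext i k
    rw [Matrix.of_apply, pd_pd n hn a i k i.isLt k.isLt z]
    simp only [triMat, Matrix.of_apply, dfun, efun, zero_add]
    split_ifs <;> first | rfl | omega | exact (‹False›).elim
  rw [hmat, det_triMat (dfun n a z) (efun a z) n 0,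
    tri_eval n hn a ha z hrel1 hrel2 n 0 (by omega) hn]
  have h2 : ∑ i ∈ Finset.range (n+1), i = ∑ i ∈ Finset.range n, (i+1) := by
    rw [Finset.sum_range_succ']
    simp
  have h3 := Finset.sum_range_id (n+1)
  have hsum : ∑ i ∈ Finset.Ico 0 n, (i+1) = n * (n+1) / 2 := by
    rw [← Finset.range_eq_Ico, ← h2, h3, Nat.add_sub_cancel, Nat.mul_comm]
  rw [hsum]
  all_goals norm_num
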